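/- arXiv:1712.03807 — 3 statements merged into one kernel-verified Lean document; each statement's English description precedes it below -/
import Mathlib

section
/- Let J ⊆ ℝ be an open interval and let B̃ : J → ℝ^{d×d} and ã : J → ℝ^{d×d} be continuous. Suppose L̃ : J → ℝ^{m×d} is differentiable with L̃′(t) = −L̃(t) B̃(t) for all t ∈ J, suppose M̃† : J → ℝ^{m×m} is differentiable with (M̃†)′(t) = −L̃(t) ã(t) L̃(t)ᵀ for all t ∈ J, and suppose M̃†(t) is invertible for every t ∈ J; write M̃(t) := M̃†(t)⁻¹ and H̃(t) := L̃(t)ᵀ M̃(t) L̃(t). Then H̃ is differentiable on J with H̃′(t) = −B̃(t)ᵀ H̃(t) − H̃(t) B̃(t) + H̃(t) ã(t) H̃(t) for every t ∈ J. -/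
open Matrix

attribute [local instance] Matrix.linftyOpNormedAddCommGroup Matrix.linftyOpNormedRing
  Matrix.linftyOpNormedAlgebra

private lemma hasDerivAt_matrix {m' : ℕ} {f : ℝ → Matrix (Fin m') (Fin m') ℝ}
    {f' : Matrix (Fin m') (Fin m') ℝ} {t : ℝ}
    (h : ∀ i j, HasDerivAt (fun s => f s i j) (f' i j) t) :
    HasDerivAt f f' t := by
  have h2 : HasDerivAt (fun s => ∑ i, ∑ j, f s i j • Matrix.single i j (1:ℝ))
      (∑ i, ∑ j, f' i j • Matrix.single i j (1:ℝ)) t :=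
    HasDerivAt.fun_sum fun i _ => HasDerivAt.fun_sum fun j _ => (h i j).smul_const _
  have e : ∀ (A : Matrix (Fin m') (Fin m') ℝ),
      A = ∑ i, ∑ j, A i j • Matrix.single i j (1:ℝ) := by
    intro A
    conv_lhs => rw [matrix_eq_sum_single A]
    simp [smul_single, smul_eq_mul]
  rw [e f']
  convert h2 using 1
  funext s
  exact e (f s)

private lemma hasDerivAt_entry {m' : ℕ} {f : ℝ → Matrix (Fin m') (Fin m') ℝ}
    {f' : Matrix (Fin m') (Fin m') ℝ} {t : ℝ} (h : HasDerivAt f f' t) (i j : Fin m') :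
    HasDerivAt (fun s => f s i j) (f' i j) t := by
  let π : Matrix (Fin m') (Fin m') ℝ →ₗ[ℝ] ℝ :=
    { toFun := fun A => A i j, map_add' := fun _ _ => rfl, map_smul' := fun _ _ => rfl }
  have := (π.toContinuousLinearMap.hasFDerivAt (x := f t)).comp_hasDerivAt t h
  exact this

private lemma entry_mul {p q r : ℕ} {A : ℝ → Matrix (Fin p) (Fin q) ℝ}
    {B : ℝ → Matrix (Fin q) (Fin r) ℝ} {A' : Matrix (Fin p) (Fin q) ℝ}
    {B' : Matrix (Fin q) (Fin r) ℝ} {t : ℝ}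
    (hA : ∀ i j, HasDerivAt (fun s => A s i j) (A' i j) t)
    (hB : ∀ i j, HasDerivAt (fun s => B s i j) (B' i j) t) :
    ∀ i j, HasDerivAt (fun s => (A s * B s) i j) ((A' * B t + A t * B') i j) t := by
  intro i j
  have h := HasDerivAt.fun_sum (fun k (_ : k ∈ (Finset.univ : Finset (Fin q))) =>
    (hA i k).mul (hB k j))
  simpa [Matrix.mul_apply, Finset.sum_add_distrib] using h

theorem riccati_for_H {d m : ℕ} (a b : ℝ)
    (Btil atil : ℝ → Matrix (Fin d) (Fin d) ℝ)
    (hB : ContinuousOn Btil (Set.Ioo a b)) (ha : ContinuousOn atil (Set.Ioo a b))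
    (Ltil : ℝ → Matrix (Fin m) (Fin d) ℝ)
    (hLtil : ∀ t ∈ Set.Ioo a b, ∀ i j,
      HasDerivAt (fun s => Ltil s i j) ((-(Ltil t * Btil t)) i j) t)
    (Mdag : ℝ → Matrix (Fin m) (Fin m) ℝ)
    (hMdag : ∀ t ∈ Set.Ioo a b, ∀ i j,
      HasDerivAt (fun s => Mdag s i j) ((-(Ltil t * atil t * (Ltil t)ᵀ)) i j) t)
    (hMinv : ∀ t ∈ Set.Ioo a b, IsUnit (Mdag t)) :
    ∀ t ∈ Set.Ioo a b, ∀ i j,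
      HasDerivAt (fun s => ((Ltil s)ᵀ * (Mdag s)⁻¹ * Ltil s) i j)
        ((-((Btil t)ᵀ * ((Ltil t)ᵀ * (Mdag t)⁻¹ * Ltil t)) -
            ((Ltil t)ᵀ * (Mdag t)⁻¹ * Ltil t) * Btil t +
            ((Ltil t)ᵀ * (Mdag t)⁻¹ * Ltil t) * atil t *
              ((Ltil t)ᵀ * (Mdag t)⁻¹ * Ltil t)) i j) t := by
  intro t ht
  have hM : HasDerivAt Mdag (-(Ltil t * atil t * (Ltil t)ᵀ)) t := hasDerivAt_matrix (hMdag t ht)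
  obtain ⟨u, hu⟩ := hMinv t ht
  -- derivative of the inverse
  have hinv : HasDerivAt (fun s => (Mdag s)⁻¹)
      ((Mdag t)⁻¹ * (Ltil t * atil t * (Ltil t)ᵀ) * (Mdag t)⁻¹) t := by
    have hF : HasFDerivAt Ring.inverse
        (-(ContinuousLinearMap.mulLeftRight ℝ _ (↑u⁻¹) (↑u⁻¹))) (Mdag t) := by
      rw [← hu]; exact hasFDerivAt_ringInverse u
    have h2 := hF.comp_hasDerivAt t hM
    have hiu : (↑u⁻¹ : Matrix (Fin m) (Fin m) ℝ) = (Mdag t)⁻¹ := by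
      rw [Matrix.nonsing_inv_eq_ringInverse, ← hu, Ring.inverse_unit]
    have hfun : (fun s => Ring.inverse (Mdag s)) = fun s => (Mdag s)⁻¹ := by
      funext s; rw [Matrix.nonsing_inv_eq_ringInverse]
    rw [Function.comp_def, hfun] at h2
    refine h2.congr_deriv ?_
    simp [ContinuousLinearMap.mulLeftRight_apply, hiu, Matrix.mul_assoc]
  have hN : ∀ i j, HasDerivAt (fun s => (Mdag s)⁻¹ i j)
      (((Mdag t)⁻¹ * (Ltil t * atil t * (Ltil t)ᵀ) * (Mdag t)⁻¹) i j) t :=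
    hasDerivAt_entry hinv
  -- derivative of the transpose
  have hLT : ∀ i j, HasDerivAt (fun s => (Ltil s)ᵀ i j)
      ((-((Btil t)ᵀ * (Ltil t)ᵀ)) i j) t := by
    intro i j
    have := hLtil t ht j i
    simpa [Matrix.transpose_apply, Matrix.mul_apply, mul_comm] using this
  have hP := entry_mul hLT hN
  have hH := entry_mul hP (hLtil t ht)
  intro i j
  have key :
      ((-((Btil t)ᵀ * (Ltil t)ᵀ) * (Mdag t)⁻¹ +
          (Ltil t)ᵀ * ((Mdag t)⁻¹ * (Ltil t * atil t * (Ltil t)ᵀ) * (Mdag t)⁻¹)) * Ltil t +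
        (Ltil t)ᵀ * (Mdag t)⁻¹ * -(Ltil t * Btil t)) =
      (-((Btil t)ᵀ * ((Ltil t)ᵀ * (Mdag t)⁻¹ * Ltil t)) -
          ((Ltil t)ᵀ * (Mdag t)⁻¹ * Ltil t) * Btil t +
          ((Ltil t)ᵀ * (Mdag t)⁻¹ * Ltil t) * atil t *
            ((Ltil t)ᵀ * (Mdag t)⁻¹ * Ltil t)) := by
    simp only [Matrix.neg_mul, Matrix.mul_neg, Matrix.add_mul, Matrix.mul_assoc,
      sub_eq_add_neg]
    abel
  have := hH i j
  rw [key] at this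
  exact this
end

section
/- Let J ⊆ ℝ be an open interval and let B̃ : J → ℝ^{d×d} and ã : J → ℝ^{d×d} be continuous. Suppose L̃ : J → ℝ^{m×d} is differentiable with L̃′(t) = −L̃(t) B̃(t), suppose M̃† : J → ℝ^{m×m} is differentiable with (M̃†)′(t) = −L̃(t) ã(t) L̃(t)ᵀ, and suppose for every t ∈ J both M̃†(t) and H̃(t) := L̃(t)ᵀ M̃†(t)⁻¹ L̃(t) are invertible; write H̃†(t) := H̃(t)⁻¹. Then H̃† is differentiable on J and satisfies the backward ordinary differential equation (H̃†)′(t) = B̃(t) H̃†(t) + H̃†(t) B̃(t)ᵀ − ã(t) for every t ∈ J. -/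
open Matrix

/-- Entrywise product rule for matrix-valued functions. -/
lemma hasDerivAt_matexp_mul {p q r : ℕ} {P : ℝ → Matrix (Fin p) (Fin q) ℝ}
    {Q : ℝ → Matrix (Fin q) (Fin r) ℝ} {P' : Matrix (Fin p) (Fin q) ℝ}
    {Q' : Matrix (Fin q) (Fin r) ℝ} {t : ℝ}
    (hP : ∀ i j, HasDerivAt (fun s => P s i j) (P' i j) t)
    (hQ : ∀ i j, HasDerivAt (fun s => Q s i j) (Q' i j) t) :
    ∀ i j, HasDerivAt (fun s => (P s * Q s) i j) ((P' * Q t + P t * Q') i j) t := by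
  intro i j
  have h : HasDerivAt (fun s => ∑ k, P s i k * Q s k j)
      (∑ k, (P' i k * Q t k j + P t i k * Q' k j)) t := by
    apply HasDerivAt.fun_sum
    intro k _
    exact (hP i k).mul (hQ k j)
  simp only [Matrix.mul_apply, Matrix.add_apply, Finset.sum_add_distrib] at h ⊢
  exact h

/-- Differentiability of the determinant of an entrywise differentiable matrix function. -/
lemma diffAt_matdet {n : ℕ} {A : ℝ → Matrix (Fin n) (Fin n) ℝ} {t : ℝ}
    (hA : ∀ i j, DifferentiableAt ℝ (fun s => A s i j) t) :
    DifferentiableAt ℝ (fun s => (A s).det) t := by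
  simp only [Matrix.det_apply, Units.smul_def, zsmul_eq_mul]
  apply DifferentiableAt.fun_sum
  intro σ _
  apply DifferentiableAt.const_mul
  exact DifferentiableAt.fun_finsetProd (fun k _ => hA (σ k) k)

lemma diffAt_matinv_entry {n : ℕ} {A : ℝ → Matrix (Fin n) (Fin n) ℝ} {t : ℝ}
    (hA : ∀ i j, DifferentiableAt ℝ (fun s => A s i j) t)
    (hdet : (A t).det ≠ 0) :
    ∀ i j, DifferentiableAt ℝ (fun s => (A s)⁻¹ i j) t := by
  intro i j
  have key : ∀ s, (A s)⁻¹ i j = ((A s).det)⁻¹ * (A s).adjugate i j := by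
    intro s
    rw [Matrix.inv_def, Ring.inverse_eq_inv']
    simp [Matrix.smul_apply, smul_eq_mul]
  simp only [key]
  apply DifferentiableAt.mul
  · exact (diffAt_matdet hA).inv hdet
  · have : ∀ s, (A s).adjugate i j = ((A s).updateRow j (Pi.single i 1)).det := by
      intro s; rw [Matrix.adjugate_apply]
    simp only [this]
    apply diffAt_matdet
    intro k l
    by_cases hk : k = j
    · subst hk
      simp only [Matrix.updateRow_self]
      exact differentiableAt_const _
    · simp only [Matrix.updateRow_ne hk]
      exact hA k l

/-- Entrywise derivative of the inverse of a matrix-valued function. -/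
lemma hasDerivAt_matinv {n : ℕ} {A : ℝ → Matrix (Fin n) (Fin n) ℝ}
    {A' : Matrix (Fin n) (Fin n) ℝ} {t : ℝ}
    (hA : ∀ i j, HasDerivAt (fun s => A s i j) (A' i j) t)
    (hU : IsUnit (A t)) :
    ∀ i j, HasDerivAt (fun s => (A s)⁻¹ i j)
      ((-((A t)⁻¹ * A' * (A t)⁻¹)) i j) t := by
  have hdet : (A t).det ≠ 0 := by
    have := (Matrix.isUnit_iff_isUnit_det (A t)).mp hU
    exact this.ne_zero
  have hAdiff : ∀ i j, DifferentiableAt ℝ (fun s => A s i j) t :=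
    fun i j => (hA i j).differentiableAt
  have hInvDiff := diffAt_matinv_entry hAdiff hdet
  set N : Matrix (Fin n) (Fin n) ℝ := (A t)⁻¹ with hNdef
  set N' : Matrix (Fin n) (Fin n) ℝ :=
    Matrix.of (fun i j => deriv (fun s => (A s)⁻¹ i j) t) with hN'def
  have hN : ∀ i j, HasDerivAt (fun s => (A s)⁻¹ i j) (N' i j) t :=
    fun i j => (hInvDiff i j).hasDerivAt
  -- eventually A s * (A s)⁻¹ = 1
  have hcontA : ContinuousAt (fun s => A s) t := by
    apply continuousAt_pi.2
    intro i
    apply continuousAt_pi.2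
    intro j
    exact (hAdiff i j).continuousAt
  have hcontdet : ContinuousAt (fun s => (A s).det) t := by
    have hc : Continuous fun M : Matrix (Fin n) (Fin n) ℝ => M.det :=
      Continuous.matrix_det continuous_id
    exact hc.continuousAt.comp hcontA
  have hev : ∀ᶠ s in nhds t, A s * (A s)⁻¹ = 1 := by
    filter_upwards [hcontdet.eventually_ne hdet] with s hs
    exact Matrix.mul_nonsing_inv (A s) (isUnit_iff_ne_zero.mpr hs)
  -- derivative of the product is zero
  have hprod := hasDerivAt_matexp_mul hA hN
  have hzero : A' * N + A t * N' = 0 := by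
    ext i j
    have h1 : HasDerivAt (fun s => (A s * (A s)⁻¹) i j) ((A' * N + A t * N') i j) t :=
      hprod i j
    have h2 : HasDerivAt (fun s => (A s * (A s)⁻¹) i j) 0 t := by
      have hc : HasDerivAt (fun _ : ℝ => (1 : Matrix (Fin n) (Fin n) ℝ) i j) 0 t :=
        hasDerivAt_const _ _
      apply hc.congr_of_eventuallyEq
      filter_upwards [hev] with s hs
      rw [hs]
    rw [h1.unique h2]
    simp
  have hNA : N * A t = 1 := Matrix.nonsing_inv_mul (A t) ((Matrix.isUnit_iff_isUnit_det (A t)).mp hU)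
  have hN'eq : N' = -(N * A' * N) := by
    have h3 : A t * N' = -(A' * N) := eq_neg_of_add_eq_zero_right hzero
    calc N' = 1 * N' := (one_mul N').symm
      _ = (N * A t) * N' := by rw [hNA]
      _ = N * (A t * N') := by rw [Matrix.mul_assoc]
      _ = N * (-(A' * N)) := by rw [h3]
      _ = -(N * A' * N) := by rw [Matrix.mul_neg, Matrix.mul_assoc]
  intro i j
  have := hN i j
  rwa [hN'eq] at this

theorem backward_ode_for_Hdagger {d m : ℕ} (a b : ℝ)
    (Btil atil : ℝ → Matrix (Fin d) (Fin d) ℝ)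
    (hB : ContinuousOn Btil (Set.Ioo a b)) (ha : ContinuousOn atil (Set.Ioo a b))
    (Ltil : ℝ → Matrix (Fin m) (Fin d) ℝ)
    (hLtil : ∀ t ∈ Set.Ioo a b, ∀ i j,
      HasDerivAt (fun s => Ltil s i j) ((-(Ltil t * Btil t)) i j) t)
    (Mdag : ℝ → Matrix (Fin m) (Fin m) ℝ)
    (hMdag : ∀ t ∈ Set.Ioo a b, ∀ i j,
      HasDerivAt (fun s => Mdag s i j) ((-(Ltil t * atil t * (Ltil t)ᵀ)) i j) t)
    (hMinv : ∀ t ∈ Set.Ioo a b, IsUnit (Mdag t))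
    (hHinv : ∀ t ∈ Set.Ioo a b, IsUnit ((Ltil t)ᵀ * (Mdag t)⁻¹ * Ltil t)) :
    ∀ t ∈ Set.Ioo a b, ∀ i j,
      HasDerivAt (fun s => ((Ltil s)ᵀ * (Mdag s)⁻¹ * Ltil s)⁻¹ i j)
        ((Btil t * ((Ltil t)ᵀ * (Mdag t)⁻¹ * Ltil t)⁻¹ +
            ((Ltil t)ᵀ * (Mdag t)⁻¹ * Ltil t)⁻¹ * (Btil t)ᵀ - atil t) i j) t := by
  intro t ht
  have hMd := hasDerivAt_matinv (hMdag t ht) (hMinv t ht)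
  have hLT : ∀ i j, HasDerivAt (fun s => (Ltil s)ᵀ i j)
      ((-(Ltil t * Btil t))ᵀ i j) t := fun i j => hLtil t ht j i
  have h1 := hasDerivAt_matexp_mul hLT hMd
  have h2 := hasDerivAt_matexp_mul h1 (hLtil t ht)
  have h3 := hasDerivAt_matinv h2 (hHinv t ht)
  set L := Ltil t
  set B := Btil t
  set aa := atil t
  set Mi := (Mdag t)⁻¹
  set H : Matrix (Fin d) (Fin d) ℝ := Lᵀ * Mi * L with hHdef
  set K : Matrix (Fin d) (Fin d) ℝ := H⁻¹ with hKdef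
  have hdetH : IsUnit H.det := (Matrix.isUnit_iff_isUnit_det H).mp (hHinv t ht)
  have hK1 : K * H = 1 := Matrix.nonsing_inv_mul H hdetH
  have hK2 : H * K = 1 := Matrix.mul_nonsing_inv H hdetH
  have hH' : ((-(L * B))ᵀ * Mi + Lᵀ * -(Mi * -(L * aa * Lᵀ) * Mi)) * L
      + Lᵀ * Mi * -(L * B) = -(Bᵀ * H) + H * aa * H - H * B := by
    rw [hHdef]
    simp only [Matrix.transpose_neg, Matrix.transpose_mul, Matrix.neg_mul,
      Matrix.mul_neg, neg_neg, Matrix.add_mul, Matrix.mul_assoc, sub_eq_add_neg]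
  have heq : -(K * (((-(L * B))ᵀ * Mi + Lᵀ * -(Mi * -(L * aa * Lᵀ) * Mi)) * L
      + Lᵀ * Mi * -(L * B)) * K) = B * K + K * Bᵀ - aa := by
    rw [hH']
    have expand : K * (-(Bᵀ * H) + H * aa * H - H * B) * K
        = -(K * Bᵀ * (H * K)) + (K * H) * aa * (H * K) - (K * H) * (B * K) := by
      noncomm_ring
    rw [expand, hK1, hK2]
    simp only [Matrix.mul_one, Matrix.one_mul]
    abel
  intro i j
  have := h3 i j
  rwa [heq] at this
end

section
/- Let L ∈ ℝ^{m×d}, let P ∈ ℝ^{d×d} be symmetric positive semidefinite with L P Lᵀ invertible, and let v ∈ ℝ^m and w ∈ ℝ^d be fixed. For a symmetric positive definite matrix Σ ∈ ℝ^{m×m}, define H†(Σ) := P − P Lᵀ (Σ + L P Lᵀ)⁻¹ L P and ν(Σ) := H†(Σ) (Lᵀ Σ⁻¹ v + w). Then for every sequence (Σ_k) of symmetric positive definite m×m matrices with ‖Σ_k‖ → 0 one has L H†(Σ_k) Lᵀ Σ_k⁻¹ → I_m and L ν(Σ_k) → v. -/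
open Matrix Filter

theorem small_noise_limit {d m : ℕ}
    (L : Matrix (Fin m) (Fin d) ℝ)
    (P : Matrix (Fin d) (Fin d) ℝ) (hP : P.PosSemidef)
    (hLPL : IsUnit (L * P * Lᵀ))
    (v : Fin m → ℝ) (w : Fin d → ℝ)
    (Sig : ℕ → Matrix (Fin m) (Fin m) ℝ)
    (hSig : ∀ k, (Sig k).PosDef)
    (hlim : Tendsto Sig atTop (nhds 0)) :
    Tendsto (fun k =>
        L * (P - P * Lᵀ * (Sig k + L * P * Lᵀ)⁻¹ * L * P) * Lᵀ * (Sig k)⁻¹)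
      atTop (nhds 1) ∧
    Tendsto (fun k =>
        L *ᵥ ((P - P * Lᵀ * (Sig k + L * P * Lᵀ)⁻¹ * L * P) *ᵥ
          (Lᵀ *ᵥ (Sig k)⁻¹ *ᵥ v + w)))
      atTop (nhds v) := by
  set A : Matrix (Fin m) (Fin m) ℝ := L * P * Lᵀ with hA
  -- A is positive semidefinite
  have hApsd : A.PosSemidef := by
    have := hP.mul_mul_conjTranspose_same L
    simpa [hA, Matrix.conjTranspose_eq_transpose_of_trivial] using this
  have hAdet : IsUnit A.det := (Matrix.isUnit_iff_isUnit_det A).mp hLPL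
  -- B k := Sig k + A is positive definite, hence invertible
  have hB : ∀ k, IsUnit (Sig k + A).det := fun k =>
    (Matrix.isUnit_iff_isUnit_det _).mp ((hSig k).add_posSemidef hApsd).isUnit
  have hSdet : ∀ k, IsUnit (Sig k).det := fun k =>
    (Matrix.isUnit_iff_isUnit_det _).mp (hSig k).isUnit
  -- key algebraic identity: L H† Lᵀ = A (Sig k + A)⁻¹ Sig k
  have key : ∀ k, L * (P - P * Lᵀ * (Sig k + A)⁻¹ * L * P) * Lᵀ
      = A * (Sig k + A)⁻¹ * Sig k := by
    intro k
    have h1 : A * (Sig k + A)⁻¹ * (Sig k + A) = A :=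
      Matrix.nonsing_inv_mul_cancel_right _ _ (hB k)
    have h2 : A * (Sig k + A)⁻¹ * Sig k = A - A * (Sig k + A)⁻¹ * A := by
      have := congrArg (· - A * (Sig k + A)⁻¹ * A) h1
      simpa [Matrix.mul_add, add_sub_cancel_right] using this
    rw [h2]
    simp only [hA, Matrix.mul_sub, Matrix.sub_mul, Matrix.mul_assoc]
  have key2 : ∀ k, L * (P - P * Lᵀ * (Sig k + A)⁻¹ * L * P) * Lᵀ * (Sig k)⁻¹
      = A * (Sig k + A)⁻¹ := by
    intro k
    rw [key k]
    exact Matrix.mul_nonsing_inv_cancel_right _ _ (hSdet k)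
  -- continuity: A * (X + A)⁻¹ is continuous at X = 0
  have hcont : ContinuousAt
      (fun X : Matrix (Fin m) (Fin m) ℝ => A * (X + A)⁻¹) 0 := by
    have hdet : ContinuousAt
        (fun X : Matrix (Fin m) (Fin m) ℝ => (X + A).det) 0 :=
      ((continuous_id.add continuous_const).matrix_det).continuousAt
    have hdetne : ((0 : Matrix (Fin m) (Fin m) ℝ) + A).det ≠ 0 := by
      simpa using hAdet.ne_zero
    have hinvdet : ContinuousAt
        (fun X : Matrix (Fin m) (Fin m) ℝ => ((X + A).det)⁻¹) 0 :=
      hdet.inv₀ hdetne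
    have hadj : ContinuousAt
        (fun X : Matrix (Fin m) (Fin m) ℝ => (X + A).adjugate) 0 :=
      ((continuous_id.add continuous_const).matrix_adjugate).continuousAt
    have hmul : Continuous (fun M : Matrix (Fin m) (Fin m) ℝ => A * M) :=
      continuous_const.matrix_mul continuous_id
    have : ContinuousAt
        (fun X : Matrix (Fin m) (Fin m) ℝ =>
          A * (((X + A).det)⁻¹ • (X + A).adjugate)) 0 :=
      hmul.continuousAt.comp (hinvdet.smul hadj)
    convert this using 2 with X
    rw [Matrix.inv_def, Ring.inverse_eq_inv]
  -- the main limit: A (Sig k + A)⁻¹ → A A⁻¹ = 1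
  have hT : Tendsto (fun k => A * (Sig k + A)⁻¹) atTop (nhds 1) := by
    have := (hcont.tendsto).comp hlim
    have h0 : A * A⁻¹ = 1 := Matrix.mul_nonsing_inv _ hAdet
    simpa [Function.comp_def, zero_add, h0] using this
  have first : Tendsto (fun k =>
      L * (P - P * Lᵀ * (Sig k + L * P * Lᵀ)⁻¹ * L * P) * Lᵀ * (Sig k)⁻¹)
      atTop (nhds 1) := by
    simpa only [← hA, key2] using hT
  refine ⟨first, ?_⟩
  -- rewrite the vector expression via M := A (Sig k + A)⁻¹
  have keyv : ∀ k,
      L *ᵥ ((P - P * Lᵀ * (Sig k + A)⁻¹ * L * P) *ᵥ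
          (Lᵀ *ᵥ (Sig k)⁻¹ *ᵥ v + w))
      = (A * (Sig k + A)⁻¹) *ᵥ v
        + (L * P - A * (Sig k + A)⁻¹ * (L * P)) *ᵥ w := by
    intro k
    have hLH : L * (P - P * Lᵀ * (Sig k + A)⁻¹ * L * P)
        = L * P - A * (Sig k + A)⁻¹ * (L * P) := by
      simp only [hA, Matrix.mul_sub, Matrix.mul_assoc]
    calc L *ᵥ ((P - P * Lᵀ * (Sig k + A)⁻¹ * L * P) *ᵥ
          (Lᵀ *ᵥ (Sig k)⁻¹ *ᵥ v + w))
        = (L * (P - P * Lᵀ * (Sig k + A)⁻¹ * L * P)) *ᵥ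
            (Lᵀ *ᵥ (Sig k)⁻¹ *ᵥ v + w) := by
          rw [Matrix.mulVec_mulVec]
      _ = (L * (P - P * Lᵀ * (Sig k + A)⁻¹ * L * P) * Lᵀ * (Sig k)⁻¹) *ᵥ v
          + (L * (P - P * Lᵀ * (Sig k + A)⁻¹ * L * P)) *ᵥ w := by
          rw [Matrix.mulVec_add, Matrix.mulVec_mulVec, Matrix.mulVec_mulVec]
      _ = (A * (Sig k + A)⁻¹) *ᵥ v
          + (L * P - A * (Sig k + A)⁻¹ * (L * P)) *ᵥ w := by
          rw [key2 k, hLH]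
  have hF : Continuous (fun M : Matrix (Fin m) (Fin m) ℝ =>
      M *ᵥ v + (L * P - M * (L * P)) *ᵥ w) := by
    exact ((continuous_id.matrix_mulVec continuous_const).add
      (((continuous_const.sub
        (continuous_id.matrix_mul continuous_const))).matrix_mulVec
        continuous_const))
  have := (hF.tendsto 1).comp hT
  have hF1 : (1 : Matrix (Fin m) (Fin m) ℝ) *ᵥ v
      + (L * P - (1 : Matrix (Fin m) (Fin m) ℝ) * (L * P)) *ᵥ w = v := by
    simp [Matrix.one_mul, sub_self]
  have h2 : Tendsto (fun k =>
      (A * (Sig k + A)⁻¹) *ᵥ v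
        + (L * P - A * (Sig k + A)⁻¹ * (L * P)) *ᵥ w) atTop (nhds v) := by
    simpa [Function.comp_def, hF1] using this
  simpa only [← hA, keyv] using h2
end
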